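/- Let F be a field of characteristic 2 and L/F an extension of degree 4 with a² ∈ F for all a ∈ L. The annihilator 𝒜 of the maximal ideal Π = ker π in L ⊗_F L equals Π · Π, the set of products zw with z, w ∈ Π. -/

import Mathlib

open TensorProduct

set_option maxHeartbeats 2000000 in
theorem stmt10 (F L : Type*) [Field F] [Field L] [Algebra F L] [CharP F 2]
    (hdim : Module.finrank F L = 4)
    (hsq : ∀ a : L, ∃ f : F, algebraMap F L f = a ^ 2) (π : (L ⊗[F] L) →ₐ[L] L) (hπ : ∀ x y : L, π (x ⊗ₜ[F] y) = x * y) :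
    {g : L ⊗[F] L | ∀ z : L ⊗[F] L, π z = 0 → g * z = 0} =
      {g : L ⊗[F] L | ∃ z w : L ⊗[F] L, π z = 0 ∧ π w = 0 ∧ g = z * w} := by
  classical
  haveI : CharP L 2 := charP_of_injective_algebraMap (algebraMap F L).injective 2
  have hπalg : ∀ f : F, π (algebraMap F (L ⊗[F] L) f) = algebraMap F L f := by
    intro f
    rw [IsScalarTower.algebraMap_apply F L (L ⊗[F] L)]
    exact π.commutes _
  have hinjLL : Function.Injective (algebraMap F (L ⊗[F] L)) := by
    intro p q h
    apply (algebraMap F L).injective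
    rw [← hπalg p, ← hπalg q, h]
  haveI : CharP (L ⊗[F] L) 2 := charP_of_injective_algebraMap hinjLL 2
  -- construct x ∉ F·1
  obtain ⟨x, hx⟩ : ∃ x : L, ¬ ∃ p : F, p • (1 : L) = x := by
    by_contra h
    push_neg at h
    have hsurj : Function.Surjective (Algebra.linearMap F L) := by
      intro t
      obtain ⟨p, hp⟩ := h t
      exact ⟨p, by simpa [Algebra.algebraMap_eq_smul_one] using hp⟩
    have hfr := LinearEquiv.finrank_eq (LinearEquiv.ofBijective (Algebra.linearMap F L)
      ⟨fun a b hab => (algebraMap F L).injective hab, hsurj⟩)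
    rw [Module.finrank_self, hdim] at hfr
    omega
  -- construct y ∉ F·1 + F·x
  obtain ⟨y, hy⟩ : ∃ y : L, ¬ ∃ p q : F, p • (1 : L) + q • x = y := by
    by_contra h
    push_neg at h
    set ψ := (LinearMap.toSpanSingleton F L 1).coprod (LinearMap.toSpanSingleton F L x) with hψ
    have hsurj : Function.Surjective ψ := by
      intro t
      obtain ⟨p, q, hpq⟩ := h t
      exact ⟨(p, q), by simpa [ψ, LinearMap.toSpanSingleton_apply] using hpq⟩
    have hr : LinearMap.range ψ = ⊤ := LinearMap.range_eq_top.2 hsurj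
    have h1 := LinearMap.finrank_range_le ψ
    rw [hr, finrank_top, hdim, Module.finrank_prod, Module.finrank_self] at h1
    omega
  -- product of two elements of the plane F·1 + F·x stays in the plane
  have hmul2 : ∀ a b c d : F, ∃ p q : F,
      (a • (1:L) + b • x) * (c • (1:L) + d • x) = p • (1:L) + q • x := by
    intro a b c d
    obtain ⟨fx, hfx⟩ := hsq x
    refine ⟨a*c + b*d*fx, a*d + b*c, ?_⟩
    simp only [Algebra.smul_def, map_add, map_mul, mul_one]
    linear_combination (-(algebraMap F L b * algebraMap F L d)) * hfx
  -- linear independence of (1, x)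
  have hpair0 : ∀ p q : F, p • (1:L) + q • x = 0 → p = 0 ∧ q = 0 := by
    intro p q h
    by_cases hq : q = 0
    · subst hq
      have hp : p = 0 := by
        rw [zero_smul, add_zero, smul_eq_zero] at h
        rcases h with h' | h'
        · exact h'
        · exact absurd h' one_ne_zero
      exact ⟨hp, rfl⟩
    · exfalso
      apply hx
      have h2 : (q⁻¹ * p) • (1:L) + x = 0 := by
        have h1 := congrArg (fun t => q⁻¹ • t) h
        simpa [smul_add, smul_smul, inv_mul_cancel₀ hq] using h1
      refine ⟨-(q⁻¹ * p), ?_⟩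
      rw [neg_smul]
      exact (eq_neg_of_add_eq_zero_right h2).symm
  -- inverses lie on the line through the element
  have hinv : ∀ t : L, t ≠ 0 → ∃ f : F, t⁻¹ = f • t := by
    intro t ht
    obtain ⟨f, hf⟩ := hsq t
    have hAf : algebraMap F L f ≠ 0 := by
      rw [hf]; exact pow_ne_zero 2 ht
    refine ⟨f⁻¹, ?_⟩
    have hmul : t * (f⁻¹ • t) = 1 := by
      rw [Algebra.smul_def, map_inv₀,
        show t * ((algebraMap F L f)⁻¹ * t) = (algebraMap F L f)⁻¹ * (t*t) from by ring,
        ← sq, ← hf, inv_mul_cancel₀ hAf]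
    exact inv_eq_of_mul_eq_one_right hmul
  -- key linear independence
  have hkey : ∀ a b c d : F, a • (1:L) + b • x + c • y + d • (x*y) = 0 →
      a = 0 ∧ b = 0 ∧ c = 0 ∧ d = 0 := by
    intro a b c d h
    have hcd : c • (1:L) + d • x = 0 := by
      by_contra hs
      apply hy
      set s := c • (1:L) + d • x with hsdef
      set r := a • (1:L) + b • x with hrdef
      have hrs : r + s * y = 0 := by
        have hsy : s * y = c • y + d • (x*y) := by
          rw [hsdef, add_mul, smul_mul_assoc, smul_mul_assoc, one_mul]
        rw [hsy, hrdef, ← add_assoc]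
        exact h
      obtain ⟨f, hfinv⟩ := hinv s hs
      have hy' : y = -(s⁻¹ * r) := by
        have hsy2 : s * y = -r := eq_neg_of_add_eq_zero_right hrs
        calc y = s⁻¹ * (s * y) := by rw [← mul_assoc, inv_mul_cancel₀ hs, one_mul]
        _ = s⁻¹ * (-r) := by rw [hsy2]
        _ = -(s⁻¹ * r) := by ring
      obtain ⟨p, q, hpq⟩ := hmul2 c d a b
      refine ⟨-(f*p), -(f*q), ?_⟩
      rw [hy', hfinv, smul_mul_assoc, hpq]
      module
    obtain ⟨hc, hd⟩ := hpair0 c d hcd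
    subst hc; subst hd
    have hab : a • (1:L) + b • x = 0 := by
      simpa using h
    obtain ⟨ha, hb⟩ := hpair0 a b hab
    exact ⟨ha, hb, rfl, rfl⟩
  -- the basis 1, x, y, xy of L over F
  have hli : LinearIndependent F ![(1:L), x, y, x*y] := by
    rw [Fintype.linearIndependent_iff]
    intro g hg
    rw [Fin.sum_univ_four] at hg
    simp only [Matrix.cons_val_zero, Matrix.cons_val_one, Matrix.head_cons,
      Matrix.cons_val_two, Matrix.tail_cons, Matrix.cons_val_three, Matrix.head_fin_const] at hg
    obtain ⟨h0, h1, h2, h3⟩ := hkey (g 0) (g 1) (g 2) (g 3) hg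
    intro i
    fin_cases i <;> assumption
  have hcard : Fintype.card (Fin 4) = Module.finrank F L := by simp [hdim]
  let B : Module.Basis (Fin 4) F L := basisOfLinearIndependentOfCardEqFinrank hli hcard
  have hB : ∀ i, B i = ![(1:L), x, y, x*y] i := by
    intro i
    rw [show (B : Fin 4 → L) = ![(1:L), x, y, x*y] from
      coe_basisOfLinearIndependentOfCardEqFinrank hli hcard]
  let ℬ : Module.Basis (Fin 4) L (L ⊗[F] L) := Algebra.TensorProduct.basis L B
  have hℬ : ∀ i, ℬ i = (1:L) ⊗ₜ[F] (![(1:L), x, y, x*y] i) := by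
    intro i
    rw [show ℬ i = (1:L) ⊗ₜ[F] (B i) from Algebra.TensorProduct.basis_apply B i, hB]
  have hℬ0 : ℬ 0 = (1:L) ⊗ₜ[F] (1:L) := by rw [hℬ]; norm_num
  have hℬ1 : ℬ 1 = (1:L) ⊗ₜ[F] x := by rw [hℬ]; norm_num
  have hℬ2 : ℬ 2 = (1:L) ⊗ₜ[F] y := by rw [hℬ]; norm_num; rfl
  have hℬ3 : ℬ 3 = (1:L) ⊗ₜ[F] (x*y) := by rw [hℬ]; norm_num; rfl
  set u : L ⊗[F] L := x ⊗ₜ[F] (1:L) + (1:L) ⊗ₜ[F] x with hu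
  set v : L ⊗[F] L := y ⊗ₜ[F] (1:L) + (1:L) ⊗ₜ[F] y with hv
  have hsmul : ∀ (l p q : L), l • (p ⊗ₜ[F] q) = (l*p) ⊗ₜ[F] q := by
    intro l p q
    rw [TensorProduct.smul_tmul', smul_eq_mul]
  -- squares of difference elements vanish
  have htzero : ∀ a : L,
      (a ⊗ₜ[F] (1:L) + (1:L) ⊗ₜ[F] a) * (a ⊗ₜ[F] (1:L) + (1:L) ⊗ₜ[F] a) = 0 := by
    intro a
    obtain ⟨f, hf⟩ := hsq a
    have hexp : ∀ s t : L ⊗[F] L, (s+t)*(s+t) = s*s + t*t + (s*t + s*t) := by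
      intro s t; ring
    rw [hexp, CharTwo.add_self_eq_zero, add_zero]
    have h1 : (a ⊗ₜ[F] (1:L)) * (a ⊗ₜ[F] (1:L)) = (algebraMap F L f) ⊗ₜ[F] (1:L) := by
      rw [Algebra.TensorProduct.tmul_mul_tmul, mul_one, ← sq, ← hf]
    have h2 : ((1:L) ⊗ₜ[F] a) * ((1:L) ⊗ₜ[F] a) = (1:L) ⊗ₜ[F] (algebraMap F L f) := by
      rw [Algebra.TensorProduct.tmul_mul_tmul, mul_one, ← sq, ← hf]
    rw [h1, h2, Algebra.algebraMap_eq_smul_one, smul_tmul]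
    exact CharTwo.add_self_eq_zero _
  have huu : u * u = 0 := htzero x
  have hvv : v * v = 0 := htzero y
  have huv_u : (u*v)*u = 0 := by rw [mul_right_comm, huu, zero_mul]
  have huv_v : (u*v)*v = 0 := by rw [mul_assoc, hvv, mul_zero]
  have hπu : π u = 0 := by
    rw [hu, map_add, hπ, hπ, mul_one, one_mul]
    exact CharTwo.add_self_eq_zero x
  have hπv : π v = 0 := by
    rw [hv, map_add, hπ, hπ, mul_one, one_mul]
    exact CharTwo.add_self_eq_zero y
  have hπuv : π (u*v) = 0 := by rw [map_mul, hπu, zero_mul]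
  -- expansions in the basis
  have hOne : (1 : L ⊗[F] L) = ℬ 0 := by rw [hℬ0, Algebra.TensorProduct.one_def]
  have hU : u = x • ℬ 0 + ℬ 1 := by
    rw [hℬ0, hℬ1, hsmul, mul_one, hu]
  have hV : v = y • ℬ 0 + ℬ 2 := by
    rw [hℬ0, hℬ2, hsmul, mul_one, hv]
  have hUV : u * v = (x*y) • ℬ 0 + y • ℬ 1 + x • ℬ 2 + ℬ 3 := by
    rw [hu, hv, hℬ0, hℬ1, hℬ2, hℬ3, hsmul, hsmul, hsmul]
    simp only [mul_one, add_mul, mul_add, Algebra.TensorProduct.tmul_mul_tmul, one_mul]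
    abel
  -- representation of arbitrary elements
  have hrep : ∀ s : L ⊗[F] L, ∃ a b c d : L,
      s = a • (1 : L ⊗[F] L) + b • u + c • v + d • (u*v) := by
    intro s
    set g : Fin 4 → L := ℬ.equivFun s with hg
    refine ⟨g 0 - (g 1 - g 3 * y) * x - (g 2 - g 3 * x) * y - g 3 * (x*y),
      g 1 - g 3 * y, g 2 - g 3 * x, g 3, ?_⟩
    have hs : ∑ i, g i • ℬ i = s := ℬ.sum_equivFun s
    rw [← hs, Fin.sum_univ_four, hUV, hU, hV, hOne]
    module
  have hπrep : ∀ a b c d : L,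
      π (a • (1 : L ⊗[F] L) + b • u + c • v + d • (u*v)) = a := by
    intro a b c d
    rw [map_add, map_add, map_add, map_smul, map_smul, map_smul, map_smul,
      map_one, hπu, hπv, hπuv]
    simp [smul_eq_mul]
  have hPirep : ∀ s, π s = 0 → ∃ b c d : L, s = b • u + c • v + d • (u*v) := by
    intro s hs
    obtain ⟨a, b, c, d, hrepr⟩ := hrep s
    have ha : a = 0 := by rw [← hπrep a b c d, ← hrepr, hs]
    exact ⟨b, c, d, by rw [hrepr, ha, zero_smul, zero_add]⟩
  -- product of two elements of Π
  have hmulPi : ∀ b c d b' c' d' : L,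
      (b • u + c • v + d • (u*v)) * (b' • u + c' • v + d' • (u*v))
        = (b*c' + c*b') • (u*v) := by
    intro b c d b' c' d'
    simp only [Algebra.smul_def, map_add, map_mul]
    linear_combination (algebraMap L (L ⊗[F] L) b * algebraMap L (L ⊗[F] L) b'
        + (algebraMap L (L ⊗[F] L) b * algebraMap L (L ⊗[F] L) d'
          + algebraMap L (L ⊗[F] L) d * algebraMap L (L ⊗[F] L) b') * v
        + algebraMap L (L ⊗[F] L) d * algebraMap L (L ⊗[F] L) d' * (v*v)) * huu
      + (algebraMap L (L ⊗[F] L) c * algebraMap L (L ⊗[F] L) c'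
        + (algebraMap L (L ⊗[F] L) c * algebraMap L (L ⊗[F] L) d'
          + algebraMap L (L ⊗[F] L) d * algebraMap L (L ⊗[F] L) c') * u) * hvv
  have huv_kill : ∀ e b c d : L,
      (e • (u*v)) * (b • u + c • v + d • (u*v)) = 0 := by
    intro e b c d
    simp only [Algebra.smul_def, map_add, map_mul]
    linear_combination (algebraMap L (L ⊗[F] L) e * algebraMap L (L ⊗[F] L) b * v
        + algebraMap L (L ⊗[F] L) e * algebraMap L (L ⊗[F] L) d * (v*v)) * huu
      + (algebraMap L (L ⊗[F] L) e * algebraMap L (L ⊗[F] L) c * u) * hvv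
  -- now the set equality
  ext g
  simp only [Set.mem_setOf_eq]
  constructor
  · intro hann
    obtain ⟨a, b, c, d, hgrep⟩ := hrep g
    -- use g * u = 0
    have hgu : g * u = 0 := hann u hπu
    have hgu' : a • u + c • (u*v) = 0 := by
      rw [hgrep] at hgu
      calc a • u + c • (u*v)
          = (a • (1 : L ⊗[F] L) + b • u + c • v + d • (u*v)) * u := by
            simp only [add_mul, smul_mul_assoc, one_mul, huu, huv_u, mul_comm v u,
              smul_zero, add_zero, zero_add]
        _ = 0 := hgu
    have hcoord1 : ℬ.equivFun.symm ![a*x + c*(x*y), a + c*y, c*x, c] = 0 := by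
      rw [Module.Basis.equivFun_symm_apply, Fin.sum_univ_four]
      simp only [Matrix.cons_val_zero, Matrix.cons_val_one, Matrix.head_cons,
        Matrix.cons_val_two, Matrix.tail_cons, Matrix.cons_val_three, Matrix.head_fin_const]
      rw [hUV, hU] at hgu'
      linear_combination (norm := module) hgu'
    have hz1 : ![a*x + c*(x*y), a + c*y, c*x, c] = 0 :=
      (LinearEquiv.map_eq_zero_iff _).mp hcoord1
    have hc : c = 0 := congrFun hz1 3
    have ha : a = 0 := by
      have := congrFun hz1 1
      simp only [Matrix.cons_val_one, Matrix.head_cons, Pi.zero_apply] at this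
      rw [hc] at this
      simpa using this
    -- use g * v = 0
    have hgv : g * v = 0 := hann v hπv
    have hgv' : a • v + b • (u*v) = 0 := by
      rw [hgrep] at hgv
      calc a • v + b • (u*v)
          = (a • (1 : L ⊗[F] L) + b • u + c • v + d • (u*v)) * v := by
            simp only [add_mul, smul_mul_assoc, one_mul, hvv, huv_v,
              smul_zero, add_zero, zero_add]
        _ = 0 := hgv
    have hcoord2 : ℬ.equivFun.symm ![a*y + b*(x*y), b*y, a + b*x, b] = 0 := by
      rw [Module.Basis.equivFun_symm_apply, Fin.sum_univ_four]
      simp only [Matrix.cons_val_zero, Matrix.cons_val_one, Matrix.head_cons,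
        Matrix.cons_val_two, Matrix.tail_cons, Matrix.cons_val_three, Matrix.head_fin_const]
      rw [hUV, hV] at hgv'
      linear_combination (norm := module) hgv'
    have hz2 : ![a*y + b*(x*y), b*y, a + b*x, b] = 0 :=
      (LinearEquiv.map_eq_zero_iff _).mp hcoord2
    have hb : b = 0 := congrFun hz2 3
    refine ⟨u, d • v, hπu, ?_, ?_⟩
    · rw [map_smul, hπv, smul_zero]
    · rw [hgrep, ha, hb, hc]
      simp only [zero_smul, zero_add, add_zero]
      rw [mul_smul_comm]
  · rintro ⟨z, w, hz, hw, rfl⟩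
    intro t ht
    obtain ⟨bz, cz, dz, hzr⟩ := hPirep z hz
    obtain ⟨bw, cw, dw, hwr⟩ := hPirep w hw
    obtain ⟨bt, ct, dt, htr⟩ := hPirep t ht
    rw [hzr, hwr, htr, hmulPi, huv_kill]
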